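/- For every positive integer n, the number of subgroups Δ of ℝ with c(ℤ, Δ) = n equals 2^{ω(n)}, where ω(n) is the number of distinct primes dividing n. -/

import Mathlib

open AddSubgroup

private lemma map_zmul_hom {x : ℝ} (c : ℤ) :
    AddSubgroup.map (zmultiplesHom ℝ x) (AddSubgroup.zmultiples c) =
      AddSubgroup.zmultiples (c • x) := by
  ext y
  simp only [AddSubgroup.mem_map, AddSubgroup.mem_zmultiples_iff, zmultiplesHom_apply]
  constructor
  · rintro ⟨z, ⟨k, rfl⟩, rfl⟩
    exact ⟨k, by rw [smul_smul, smul_eq_mul]⟩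
  · rintro ⟨k, rfl⟩
    exact ⟨k * c, ⟨k, by rw [smul_eq_mul]⟩, by rw [mul_smul]⟩

private lemma zmh_inj {x : ℝ} (hx : x ≠ 0) : Function.Injective (zmultiplesHom ℝ x) := by
  intro k l hkl
  simp only [zmultiplesHom_apply, zsmul_eq_mul] at hkl
  exact_mod_cast mul_right_cancel₀ hx hkl

private lemma relindex_map_inj {f : ℤ →+ ℝ} (hf : Function.Injective f) (A B : AddSubgroup ℤ) :
    (AddSubgroup.map f A).relIndex (AddSubgroup.map f B) = A.relIndex B := by
  conv_rhs => rw [← AddSubgroup.comap_map_eq_self_of_injective hf A]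
  rw [AddSubgroup.relIndex_comap]

private lemma int_relindex {a b : ℕ} (ha : 0 < a) (hb : 0 < b) (h : Nat.Coprime a b) :
    (AddSubgroup.zmultiples (a : ℤ)).relIndex (AddSubgroup.zmultiples (b : ℤ)) = a := by
  have hinf : AddSubgroup.zmultiples (a : ℤ) ⊓ AddSubgroup.zmultiples (b : ℤ) =
      AddSubgroup.zmultiples ((a : ℤ) * b) := by
    ext k
    simp only [AddSubgroup.mem_inf, Int.mem_zmultiples_iff]
    constructor
    · rintro ⟨h1, h2⟩
      exact (Nat.isCoprime_iff_coprime.mpr h).mul_dvd h1 h2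
    · intro hd
      exact ⟨(dvd_mul_right _ _).trans hd, (dvd_mul_left _ _).trans hd⟩
  have hle : AddSubgroup.zmultiples ((a : ℤ) * b) ≤ AddSubgroup.zmultiples (b : ℤ) := by
    intro x hx
    rw [Int.mem_zmultiples_iff] at hx ⊢
    exact (dvd_mul_left _ _).trans hx
  have key := AddSubgroup.relIndex_mul_index hle
  rw [Int.index_zmultiples, Int.index_zmultiples] at key
  simp only [Int.natAbs_mul, Int.natAbs_natCast] at key
  rw [← AddSubgroup.inf_relIndex_right, hinf]
  exact Nat.eq_of_mul_eq_mul_right hb key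

private lemma relindex_of_div {a b : ℕ} (ha : 0 < a) (hb : 0 < b) (h : Nat.Coprime a b) :
    (AddSubgroup.zmultiples ((a : ℝ) / b)).relIndex (AddSubgroup.zmultiples (1 : ℝ)) = a ∧
    (AddSubgroup.zmultiples (1 : ℝ)).relIndex (AddSubgroup.zmultiples ((a : ℝ) / b)) = b := by
  have hb0 : (b : ℝ) ≠ 0 := Nat.cast_ne_zero.mpr hb.ne'
  set f := zmultiplesHom ℝ ((b : ℝ)⁻¹) with hf
  have hinj : Function.Injective f := zmh_inj (inv_ne_zero hb0)
  have h1 : AddSubgroup.zmultiples ((a : ℝ) / b) =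
      AddSubgroup.map f (AddSubgroup.zmultiples (a : ℤ)) := by
    rw [map_zmul_hom]
    congr 1
    rw [zsmul_eq_mul]
    push_cast
    ring
  have h2 : AddSubgroup.zmultiples (1 : ℝ) =
      AddSubgroup.map f (AddSubgroup.zmultiples (b : ℤ)) := by
    rw [map_zmul_hom]
    congr 1
    rw [zsmul_eq_mul]
    push_cast
    field_simp
  rw [h1, h2, relindex_map_inj hinj, relindex_map_inj hinj]
  exact ⟨int_relindex ha hb h, int_relindex hb ha h.symm⟩

private lemma zmultiples_natAbs (c : ℤ) :
    AddSubgroup.zmultiples ((c.natAbs : ℕ) : ℤ) = AddSubgroup.zmultiples c := by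
  ext k
  simp only [Int.mem_zmultiples_iff]
  rw [Int.natCast_natAbs]
  exact abs_dvd c k

private lemma classify (Δ : AddSubgroup ℝ) {a b : ℕ} (ha : 0 < a) (hb : 0 < b)
    (hA : Δ.relIndex (AddSubgroup.zmultiples (1 : ℝ)) = a)
    (hB : (AddSubgroup.zmultiples (1 : ℝ)).relIndex Δ = b) :
    Δ = AddSubgroup.zmultiples ((a : ℝ) / b) := by
  have hb0 : (b : ℝ) ≠ 0 := Nat.cast_ne_zero.mpr hb.ne'
  have ha0 : (a : ℝ) ≠ 0 := Nat.cast_ne_zero.mpr ha.ne'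
  set φ := zmultiplesHom ℝ (1 : ℝ) with hφ
  have hφrange : φ.range = AddSubgroup.zmultiples (1 : ℝ) := AddSubgroup.range_zmultiplesHom 1
  -- Step 1 : Δ ⊓ ℤ = zmultiples a
  have hS : (AddSubgroup.comap φ Δ).index = a := by
    rw [AddSubgroup.index_comap, hφrange, hA]
  obtain ⟨c, hc⟩ := Int.subgroup_cyclic (AddSubgroup.comap φ Δ)
  rw [← AddSubgroup.zmultiples_eq_closure] at hc
  have hca : c.natAbs = a := by rw [hc, Int.index_zmultiples] at hS; exact hS
  have hzc : AddSubgroup.zmultiples c = AddSubgroup.zmultiples ((a : ℕ) : ℤ) := by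
    rw [← hca, zmultiples_natAbs]
  have hstep1 : Δ ⊓ AddSubgroup.zmultiples (1 : ℝ) = AddSubgroup.zmultiples ((a : ℕ) : ℝ) := by
    have hmc := AddSubgroup.map_comap_eq φ Δ
    rw [hc, hzc, map_zmul_hom, hφrange] at hmc
    rw [inf_comm, ← hmc]
    congr 1
    simp
  -- Step 2 : Δ ≤ G
  set G := AddSubgroup.zmultiples ((a : ℝ) / b) with hG
  have hΔG : Δ ≤ G := by
    intro x hx
    have hmem : b • x ∈ Δ ⊓ AddSubgroup.zmultiples (1 : ℝ) := by
      constructor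
      · exact AddSubgroup.nsmul_mem _ hx b
      · have hB' : ((AddSubgroup.zmultiples (1 : ℝ)).addSubgroupOf Δ).index = b := hB
        have := AddSubgroup.nsmul_index_mem
          ((AddSubgroup.zmultiples (1 : ℝ)).addSubgroupOf Δ) (⟨x, hx⟩ : Δ)
        rw [hB'] at this
        simpa [AddSubgroup.mem_addSubgroupOf] using this
    rw [hstep1] at hmem
    rw [AddSubgroup.mem_zmultiples_iff] at hmem ⊢
    obtain ⟨k, hk⟩ := hmem
    refine ⟨k, ?_⟩
    rw [zsmul_eq_mul] at hk ⊢
    rw [nsmul_eq_mul] at hk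
    field_simp
    linear_combination hk
  have hzaΔ : AddSubgroup.zmultiples ((a : ℕ) : ℝ) ≤ Δ := by
    rw [← hstep1]; exact inf_le_left
  -- relindex (zmultiples a) Δ = b
  have h5 : (AddSubgroup.zmultiples ((a : ℕ) : ℝ)).relIndex Δ = b := by
    rw [← hstep1, AddSubgroup.inf_relIndex_left, hB]
  -- relindex (zmultiples a) G = b
  have h4 : (AddSubgroup.zmultiples ((a : ℕ) : ℝ)).relIndex G = b := by
    set ψ := zmultiplesHom ℝ ((a : ℝ) / b) with hψdef
    have hψ : Function.Injective ψ := zmh_inj (div_ne_zero ha0 hb0)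
    have e1 : AddSubgroup.zmultiples ((a : ℕ) : ℝ) =
        AddSubgroup.map ψ (AddSubgroup.zmultiples (b : ℤ)) := by
      rw [map_zmul_hom]
      congr 1
      rw [zsmul_eq_mul]
      push_cast
      field_simp
    have e2 : G = AddSubgroup.map ψ (AddSubgroup.zmultiples ((1 : ℕ) : ℤ)) := by
      rw [map_zmul_hom]
      congr 1
      simp [hG]
    rw [e1, e2, relindex_map_inj hψ]
    exact int_relindex hb one_pos (Nat.coprime_one_right b)
  have h6 := AddSubgroup.relIndex_mul_relIndex _ Δ G hzaΔ hΔG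
  rw [h5, h4] at h6
  have h7 : Δ.relIndex G = 1 :=
    Nat.eq_of_mul_eq_mul_left hb (h6.trans (mul_one b).symm)
  exact le_antisymm hΔG (AddSubgroup.relIndex_eq_one.mp h7)

private lemma primeFactors_prod_pow {S : Finset ℕ} (hS : ∀ p ∈ S, p.Prime) {f : ℕ → ℕ}
    (hf : ∀ p ∈ S, f p ≠ 0) : (∏ p ∈ S, p ^ f p).primeFactors = S := by
  induction S using Finset.induction_on with
  | empty => simp
  | @insert q s hq ih =>
    have hqp : q.Prime := hS q (Finset.mem_insert_self q s)
    have hrest : ∀ p ∈ s, p.Prime := fun p hp => hS p (Finset.mem_insert_of_mem hp)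
    have hfrest : ∀ p ∈ s, f p ≠ 0 := fun p hp => hf p (Finset.mem_insert_of_mem hp)
    have hne : (∏ p ∈ s, p ^ f p) ≠ 0 :=
      Finset.prod_ne_zero_iff.mpr fun p hp => pow_ne_zero _ (hrest p hp).ne_zero
    rw [Finset.prod_insert hq, Nat.primeFactors_mul (pow_ne_zero _ hqp.ne_zero) hne, ih hrest hfrest,
      Nat.primeFactors_prime_pow (hf q (Finset.mem_insert_self q s)) hqp, Finset.insert_eq]

private lemma prod_part {a b n : ℕ} (ha : a ≠ 0) (hb : b ≠ 0) (hab : a * b = n)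
    (hcop : a.Coprime b) : ∏ p ∈ a.primeFactors, p ^ n.factorization p = a := by
  have hcongr : ∀ p ∈ a.primeFactors, p ^ n.factorization p = p ^ a.factorization p := by
    intro p hp
    congr 1
    rw [← hab, Nat.factorization_mul ha hb]
    simp only [Finsupp.add_apply]
    have hb0 : b.factorization p = 0 := by
      apply Nat.factorization_eq_zero_of_not_dvd
      intro hdvd
      have hpa : p ∣ a := Nat.dvd_of_mem_primeFactors hp
      have : p ∣ 1 := hcop ▸ Nat.dvd_gcd hpa hdvd
      exact (Nat.mem_primeFactors.mp hp).1.one_lt.ne' (Nat.dvd_one.mp this)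
    omega
  rw [Finset.prod_congr rfl hcongr]
  simpa [Finsupp.prod] using Nat.factorization_prod_pow_eq_self ha

theorem card_commensurable_subgroups_eq_two_pow_omega (n : ℕ) (hn : 0 < n) :
    Nat.card {Δ : AddSubgroup ℝ //
        AddSubgroup.relIndex Δ (AddSubgroup.zmultiples (1 : ℝ)) *
          AddSubgroup.relIndex (AddSubgroup.zmultiples (1 : ℝ)) Δ = n} =
      2 ^ n.primeFactors.card := by
  have hn' : n ≠ 0 := hn.ne'
  -- the bijection with coprime factorizations of n
  let f : {p : ℕ × ℕ // p.1 * p.2 = n ∧ p.1.Coprime p.2} →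
      {Δ : AddSubgroup ℝ //
        AddSubgroup.relIndex Δ (AddSubgroup.zmultiples (1 : ℝ)) *
          AddSubgroup.relIndex (AddSubgroup.zmultiples (1 : ℝ)) Δ = n} := fun p =>
    ⟨AddSubgroup.zmultiples ((p.1.1 : ℝ) / p.1.2), by
      obtain ⟨⟨a, b⟩, hab, hcop⟩ := p
      have ha : 0 < a := Nat.pos_of_ne_zero fun h => hn' (by simp [← hab, h])
      have hb : 0 < b := Nat.pos_of_ne_zero fun h => hn' (by simp [← hab, h])
      obtain ⟨e1, e2⟩ := relindex_of_div ha hb hcop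
      simpa [e1, e2] using hab⟩
  have hfbij : Function.Bijective f := by
    constructor
    · rintro ⟨⟨a, b⟩, hab, hcop⟩ ⟨⟨a', b'⟩, hab', hcop'⟩ hfe
      have ha : 0 < a := Nat.pos_of_ne_zero fun h => hn' (by simp [← hab, h])
      have hb : 0 < b := Nat.pos_of_ne_zero fun h => hn' (by simp [← hab, h])
      have ha' : 0 < a' := Nat.pos_of_ne_zero fun h => hn' (by simp [← hab', h])
      have hb' : 0 < b' := Nat.pos_of_ne_zero fun h => hn' (by simp [← hab', h])
      have hzm : AddSubgroup.zmultiples ((a : ℝ) / b) = AddSubgroup.zmultiples ((a' : ℝ) / b') :=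
        congrArg Subtype.val hfe
      obtain ⟨e1, e2⟩ := relindex_of_div ha hb hcop
      obtain ⟨e1', e2'⟩ := relindex_of_div ha' hb' hcop'
      rw [hzm] at e1 e2
      apply Subtype.ext
      simp only [Prod.mk.injEq]
      exact ⟨e1.symm.trans e1', e2.symm.trans e2'⟩
    · rintro ⟨Δ, hΔ⟩
      set a := AddSubgroup.relIndex Δ (AddSubgroup.zmultiples (1 : ℝ)) with haeq
      set b := AddSubgroup.relIndex (AddSubgroup.zmultiples (1 : ℝ)) Δ with hbeq
      have hab : a * b = n := hΔ
      have ha : 0 < a := Nat.pos_of_ne_zero fun h => hn' (by simp [← hab, h])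
      have hb : 0 < b := Nat.pos_of_ne_zero fun h => hn' (by simp [← hab, h])
      have hcls : Δ = AddSubgroup.zmultiples ((a : ℝ) / b) := classify Δ ha hb rfl rfl
      -- show a and b are coprime
      have hg : 0 < Nat.gcd a b := Nat.gcd_pos_of_pos_left b ha
      have hcop' : (a / Nat.gcd a b).Coprime (b / Nat.gcd a b) :=
        Nat.coprime_div_gcd_div_gcd hg
      have ha' : 0 < a / Nat.gcd a b :=
        Nat.div_pos (Nat.le_of_dvd ha (Nat.gcd_dvd_left a b)) hg
      have hb' : 0 < b / Nat.gcd a b :=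
        Nat.div_pos (Nat.le_of_dvd hb (Nat.gcd_dvd_right a b)) hg
      have hdiv : (a : ℝ) / b = ((a / Nat.gcd a b : ℕ) : ℝ) / ((b / Nat.gcd a b : ℕ) : ℝ) := by
        have hb0 : ((b / Nat.gcd a b : ℕ) : ℝ) ≠ 0 := Nat.cast_ne_zero.mpr hb'.ne'
        have hbb0 : (b : ℝ) ≠ 0 := Nat.cast_ne_zero.mpr hb.ne'
        have hkey : a * (b / Nat.gcd a b) = a / Nat.gcd a b * b := by
          rw [← Nat.mul_div_assoc a (Nat.gcd_dvd_right a b),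
            mul_comm (a / Nat.gcd a b) b, ← Nat.mul_div_assoc b (Nat.gcd_dvd_left a b),
            mul_comm a b]
        rw [div_eq_div_iff hbb0 hb0]
        exact_mod_cast congrArg (Nat.cast : ℕ → ℝ) hkey
      obtain ⟨e1, e2⟩ := relindex_of_div ha' hb' hcop'
      rw [← hdiv, ← hcls] at e1
      have hga : a / Nat.gcd a b = a := e1.symm.trans haeq.symm
      have hcop : a.Coprime b :=
        (Nat.div_eq_self.mp hga).resolve_left ha.ne'
      exact ⟨⟨(a, b), hab, hcop⟩, Subtype.ext hcls.symm⟩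
  rw [← Nat.card_eq_of_bijective f hfbij]
  -- now count coprime factorizations
  have hcount : Nat.card {p : ℕ × ℕ // p.1 * p.2 = n ∧ p.1.Coprime p.2} =
      (Finset.filter (fun p : ℕ × ℕ => p.1.Coprime p.2) n.divisorsAntidiagonal).card := by
    rw [← Nat.card_eq_finsetCard]
    apply Nat.card_congr
    apply Equiv.subtypeEquivRight
    intro p
    simp only [Finset.mem_filter, Nat.mem_divisorsAntidiagonal, hn', ne_eq,
      not_false_eq_true, and_true]
  rw [hcount, ← Finset.card_powerset]
  apply Finset.card_bij' (i := fun (p : ℕ × ℕ) _ => p.1.primeFactors)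
    (j := fun (S : Finset ℕ) _ =>
      (∏ p ∈ S, p ^ n.factorization p, ∏ p ∈ n.primeFactors \ S, p ^ n.factorization p))
  · -- hi : image in powerset
    rintro ⟨a, b⟩ hp
    simp only [Finset.mem_filter, Nat.mem_divisorsAntidiagonal] at hp
    obtain ⟨⟨hab, -⟩, -⟩ := hp
    exact Finset.mem_powerset.mpr (Nat.primeFactors_mono (Dvd.intro b hab) hn')
  · -- hj : preimage in filter
    intro S hS
    rw [Finset.mem_powerset] at hS
    have hSsub := hS
    have hprime : ∀ p ∈ n.primeFactors, p.Prime := fun p hp => Nat.prime_of_mem_primeFactors hp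
    simp only [Finset.mem_filter, Nat.mem_divisorsAntidiagonal]
    have hdisj : Disjoint S (n.primeFactors \ S) := Finset.disjoint_sdiff
    refine ⟨⟨?_, hn'⟩, ?_⟩
    · rw [← Finset.prod_union hdisj, Finset.union_sdiff_of_subset hSsub]
      have := Nat.factorization_prod_pow_eq_self hn'
      simpa [Finsupp.prod] using this
    · apply Nat.Coprime.prod_left
      intro p hpS
      apply Nat.Coprime.prod_right
      intro q hq
      rw [Finset.mem_sdiff] at hq
      have hpq : p ≠ q := fun h => hq.2 (h ▸ hpS)
      exact Nat.Coprime.pow _ _ ((Nat.coprime_primes (hprime p (hSsub hpS))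
        (hprime q hq.1)).mpr hpq)
  · -- left inverse
    rintro ⟨a, b⟩ hp
    simp only [Finset.mem_filter, Nat.mem_divisorsAntidiagonal] at hp
    obtain ⟨⟨hab, -⟩, hcop⟩ := hp
    have ha : a ≠ 0 := fun h => hn' (by simp [← hab, h])
    have hb : b ≠ 0 := fun h => hn' (by simp [← hab, h])
    have hcompl : n.primeFactors \ a.primeFactors = b.primeFactors := by
      rw [← hab, Nat.Coprime.primeFactors_mul hcop,
        Finset.union_sdiff_cancel_left (Nat.Coprime.disjoint_primeFactors hcop)]
    simp only [Prod.mk.injEq]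
    constructor
    · exact prod_part ha hb hab hcop
    · rw [hcompl]
      exact prod_part hb ha (by rw [mul_comm]; exact hab) hcop.symm
  · -- right inverse
    intro S hS
    rw [Finset.mem_powerset] at hS
    simp only
    apply primeFactors_prod_pow
    · exact fun p hp => Nat.prime_of_mem_primeFactors (hS hp)
    · intro p hp
      have hpn := hS hp
      rw [← Finsupp.mem_support_iff, Nat.support_factorization]
      exact hpn
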